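/- arXiv:1402.0130 — 9 statements merged into one kernel-verified Lean document; each statement's English description precedes it below -/
import Mathlib

section
/- The graph of the jump map G of the two-gene hybrid system, i.e. the set {(z,w) ∈ ℝ⁴ × ℝ⁴ : z ∈ D, w ∈ G(z)}, is a closed subset of ℝ⁴ × ℝ⁴; moreover G(z) is nonempty for every z ∈ D. (Hence G is outer semicontinuous and locally bounded relative to D.) -/
/-- The graph of the jump map `G` of the two-gene hybrid system,
`{(z, w) : z ∈ D, w ∈ G z}`, is closed in `ℝ⁴ × ℝ⁴`, and `G z` is nonempty for every `z ∈ D`. -/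
theorem jump_map_graph_closed_and_nonempty
    (k₁ k₂ γ₁ γ₂ θ₁ θ₂ h₁ h₂ : ℝ)
    (hk₁ : 0 < k₁) (hk₂ : 0 < k₂) (hγ₁ : 0 < γ₁) (hγ₂ : 0 < γ₂)
    (hθ₁ : 0 < θ₁) (hθ₂ : 0 < θ₂) (hh₁ : 0 < h₁) (hh₂ : 0 < h₂)
    (hθh₁ : 0 < θ₁ - h₁) (hθh₂ : 0 < θ₂ - h₂)
    (η₁ η₂ : ℝ → ℝ → ℝ)
    (hη₁ : ∀ x q, η₁ x q = (2 * q - 1) * (-x + θ₁ + (1 - 2 * q) * h₁))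
    (hη₂ : ∀ x q, η₂ x q = (2 * q - 1) * (-x + θ₂ + (1 - 2 * q) * h₂))
    (C D : Set (ℝ × ℝ × ℝ × ℝ))
    (hC : C = {z : ℝ × ℝ × ℝ × ℝ |
      0 ≤ z.1 ∧ 0 ≤ z.2.1 ∧ (z.2.2.1 = 0 ∨ z.2.2.1 = 1) ∧ (z.2.2.2 = 0 ∨ z.2.2.2 = 1) ∧
      η₁ z.1 z.2.2.1 ≤ 0 ∧ η₂ z.2.1 z.2.2.2 ≤ 0})
    (hD : D = {z ∈ C | η₁ z.1 z.2.2.1 = 0} ∪ {z ∈ C | η₂ z.2.1 z.2.2.2 = 0})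
    (g₁ g₂ : (ℝ × ℝ × ℝ × ℝ) → (ℝ × ℝ × ℝ × ℝ))
    (hg₁ : ∀ z : ℝ × ℝ × ℝ × ℝ, g₁ z = (z.1, z.2.1, 1 - z.2.2.1, z.2.2.2))
    (hg₂ : ∀ z : ℝ × ℝ × ℝ × ℝ, g₂ z = (z.1, z.2.1, z.2.2.1, 1 - z.2.2.2))
    (G : (ℝ × ℝ × ℝ × ℝ) → Set (ℝ × ℝ × ℝ × ℝ))
    (hG1 : ∀ z : ℝ × ℝ × ℝ × ℝ, η₁ z.1 z.2.2.1 = 0 → η₂ z.2.1 z.2.2.2 < 0 → G z = {g₁ z})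
    (hG2 : ∀ z : ℝ × ℝ × ℝ × ℝ, η₁ z.1 z.2.2.1 < 0 → η₂ z.2.1 z.2.2.2 = 0 → G z = {g₂ z})
    (hG3 : ∀ z : ℝ × ℝ × ℝ × ℝ, η₁ z.1 z.2.2.1 = 0 → η₂ z.2.1 z.2.2.2 = 0 →
      G z = {g₁ z, g₂ z}) :
    IsClosed {p : (ℝ × ℝ × ℝ × ℝ) × (ℝ × ℝ × ℝ × ℝ) | p.1 ∈ D ∧ p.2 ∈ G p.1} ∧
      ∀ z ∈ D, (G z).Nonempty := by

  constructor
  · -- closedness of the graph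
    have key : {p : (ℝ × ℝ × ℝ × ℝ) × (ℝ × ℝ × ℝ × ℝ) | p.1 ∈ D ∧ p.2 ∈ G p.1} =
        {p : (ℝ × ℝ × ℝ × ℝ) × (ℝ × ℝ × ℝ × ℝ) |
          p.1 ∈ C ∧ η₁ p.1.1 p.1.2.2.1 = 0 ∧ p.2 = g₁ p.1} ∪
        {p : (ℝ × ℝ × ℝ × ℝ) × (ℝ × ℝ × ℝ × ℝ) |
          p.1 ∈ C ∧ η₂ p.1.2.1 p.1.2.2.2 = 0 ∧ p.2 = g₂ p.1} := by
      ext p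
      simp only [Set.mem_setOf_eq, Set.mem_union, hD, Set.mem_sep_iff]
      constructor
      · rintro ⟨hzD, hw⟩
        rcases hzD with ⟨hzC, h1⟩ | ⟨hzC, h2⟩
        · have hle2 : η₂ p.1.2.1 p.1.2.2.2 ≤ 0 := by
            rw [hC] at hzC; exact hzC.2.2.2.2.2
          rcases lt_or_eq_of_le hle2 with h | h
          · rw [hG1 p.1 h1 h, Set.mem_singleton_iff] at hw
            exact Or.inl ⟨hzC, h1, hw⟩
          · rw [hG3 p.1 h1 h] at hw
            rcases hw with hw | hw
            · exact Or.inl ⟨hzC, h1, hw⟩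
            · exact Or.inr ⟨hzC, h, hw⟩
        · have hle1 : η₁ p.1.1 p.1.2.2.1 ≤ 0 := by
            rw [hC] at hzC; exact hzC.2.2.2.2.1
          rcases lt_or_eq_of_le hle1 with h | h
          · rw [hG2 p.1 h h2, Set.mem_singleton_iff] at hw
            exact Or.inr ⟨hzC, h2, hw⟩
          · rw [hG3 p.1 h h2] at hw
            rcases hw with hw | hw
            · exact Or.inl ⟨hzC, h, hw⟩
            · exact Or.inr ⟨hzC, h2, hw⟩
      · rintro (⟨hzC, h1, hw⟩ | ⟨hzC, h2, hw⟩)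
        · refine ⟨Or.inl ⟨hzC, h1⟩, ?_⟩
          have hle2 : η₂ p.1.2.1 p.1.2.2.2 ≤ 0 := by
            rw [hC] at hzC; exact hzC.2.2.2.2.2
          rcases lt_or_eq_of_le hle2 with h | h
          · rw [hG1 p.1 h1 h]; exact hw
          · rw [hG3 p.1 h1 h]; exact Or.inl hw
        · refine ⟨Or.inr ⟨hzC, h2⟩, ?_⟩
          have hle1 : η₁ p.1.1 p.1.2.2.1 ≤ 0 := by
            rw [hC] at hzC; exact hzC.2.2.2.2.1
          rcases lt_or_eq_of_le hle1 with h | h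
          · rw [hG2 p.1 h h2]; exact hw
          · rw [hG3 p.1 h h2]; exact Or.inr hw
    rw [key]
    have hCclosed : IsClosed
        {p : (ℝ × ℝ × ℝ × ℝ) × (ℝ × ℝ × ℝ × ℝ) | p.1 ∈ C} := by
      have : {p : (ℝ × ℝ × ℝ × ℝ) × (ℝ × ℝ × ℝ × ℝ) | p.1 ∈ C} =
          {p : (ℝ × ℝ × ℝ × ℝ) × (ℝ × ℝ × ℝ × ℝ) | 0 ≤ p.1.1} ∩
          {p | 0 ≤ p.1.2.1} ∩
          ((fun p : (ℝ × ℝ × ℝ × ℝ) × (ℝ × ℝ × ℝ × ℝ) => p.1.2.2.1) ⁻¹' ({0, 1} : Set ℝ)) ∩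
          ((fun p : (ℝ × ℝ × ℝ × ℝ) × (ℝ × ℝ × ℝ × ℝ) => p.1.2.2.2) ⁻¹' ({0, 1} : Set ℝ)) ∩
          {p | (2 * p.1.2.2.1 - 1) * (-p.1.1 + θ₁ + (1 - 2 * p.1.2.2.1) * h₁) ≤ 0} ∩
          {p | (2 * p.1.2.2.2 - 1) * (-p.1.2.1 + θ₂ + (1 - 2 * p.1.2.2.2) * h₂) ≤ 0} := by
        ext p
        simp only [hC, Set.mem_setOf_eq, Set.mem_inter_iff, Set.mem_preimage,
          Set.mem_insert_iff, Set.mem_singleton_iff, hη₁, hη₂]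
        tauto
      rw [this]
      have c01 : IsClosed ({0, 1} : Set ℝ) :=
        (isClosed_singleton.union isClosed_singleton)
      exact (((((isClosed_le (by fun_prop) (by fun_prop)).inter
        (isClosed_le (by fun_prop) (by fun_prop))).inter
        (c01.preimage (by fun_prop))).inter
        (c01.preimage (by fun_prop))).inter
        (isClosed_le (by fun_prop) (by fun_prop))).inter
        (isClosed_le (by fun_prop) (by fun_prop))
    have hS1 : IsClosed {p : (ℝ × ℝ × ℝ × ℝ) × (ℝ × ℝ × ℝ × ℝ) |
        p.1 ∈ C ∧ η₁ p.1.1 p.1.2.2.1 = 0 ∧ p.2 = g₁ p.1} := by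
      have : {p : (ℝ × ℝ × ℝ × ℝ) × (ℝ × ℝ × ℝ × ℝ) |
          p.1 ∈ C ∧ η₁ p.1.1 p.1.2.2.1 = 0 ∧ p.2 = g₁ p.1} =
          {p : (ℝ × ℝ × ℝ × ℝ) × (ℝ × ℝ × ℝ × ℝ) | p.1 ∈ C} ∩
          {p | (2 * p.1.2.2.1 - 1) * (-p.1.1 + θ₁ + (1 - 2 * p.1.2.2.1) * h₁) = 0} ∩
          {p | p.2 = (p.1.1, p.1.2.1, 1 - p.1.2.2.1, p.1.2.2.2)} := by
        ext p
        simp only [Set.mem_setOf_eq, Set.mem_inter_iff, hη₁, hg₁]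
        tauto
      rw [this]
      exact (hCclosed.inter (isClosed_eq (by fun_prop) continuous_const)).inter
        (isClosed_eq continuous_snd (by fun_prop))
    have hS2 : IsClosed {p : (ℝ × ℝ × ℝ × ℝ) × (ℝ × ℝ × ℝ × ℝ) |
        p.1 ∈ C ∧ η₂ p.1.2.1 p.1.2.2.2 = 0 ∧ p.2 = g₂ p.1} := by
      have : {p : (ℝ × ℝ × ℝ × ℝ) × (ℝ × ℝ × ℝ × ℝ) |
          p.1 ∈ C ∧ η₂ p.1.2.1 p.1.2.2.2 = 0 ∧ p.2 = g₂ p.1} =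
          {p : (ℝ × ℝ × ℝ × ℝ) × (ℝ × ℝ × ℝ × ℝ) | p.1 ∈ C} ∩
          {p | (2 * p.1.2.2.2 - 1) * (-p.1.2.1 + θ₂ + (1 - 2 * p.1.2.2.2) * h₂) = 0} ∩
          {p | p.2 = (p.1.1, p.1.2.1, p.1.2.2.1, 1 - p.1.2.2.2)} := by
        ext p
        simp only [Set.mem_setOf_eq, Set.mem_inter_iff, hη₂, hg₂]
        tauto
      rw [this]
      exact (hCclosed.inter (isClosed_eq (by fun_prop) continuous_const)).inter
        (isClosed_eq continuous_snd (by fun_prop))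
    exact hS1.union hS2
  · -- nonemptiness
    intro z hz
    rw [hD] at hz
    rcases hz with ⟨hzC, h1⟩ | ⟨hzC, h2⟩
    · have hle2 : η₂ z.2.1 z.2.2.2 ≤ 0 := by
        rw [hC] at hzC; exact hzC.2.2.2.2.2
      rcases lt_or_eq_of_le hle2 with h | h
      · rw [hG1 z h1 h]; exact ⟨g₁ z, rfl⟩
      · rw [hG3 z h1 h]; exact ⟨g₁ z, Or.inl rfl⟩
    · have hle1 : η₁ z.1 z.2.2.1 ≤ 0 := by
        rw [hC] at hzC; exact hzC.2.2.2.2.1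
      rcases lt_or_eq_of_le hle1 with h | h
      · rw [hG2 z h h2]; exact ⟨g₂ z, rfl⟩
      · rw [hG3 z h h2]; exact ⟨g₂ z, Or.inr rfl⟩
end

section
/- Let R₁ = [0, θ₁+h₁] × [0, θ₂+h₂] ⊂ ℝ². For every x = (x₁,x₂) ∈ R₁ with x₁ < θ₁ + h₁, the vector (k₁ − γ₁x₁, −γ₂x₂) belongs to the tangent cone of R₁ at x. (This is the viability condition (VC) on the boundary of the flow-set component C₁ away from the jump set, used to prove existence of nontrivial solutions.) -/
/-- Positive scaling: if `ε • v` is tangent and `ε > 0`, then `v` is tangent. -/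
lemma tangent_smul_mem {E : Type*} [NormedAddCommGroup E] [NormedSpace ℝ E]
    {s : Set E} {x v : E} {ε : ℝ} (hε : 0 < ε)
    (h : ε • v ∈ tangentConeAt ℝ s x) : v ∈ tangentConeAt ℝ s x := by
  obtain ⟨α, l, hl, c, d, hd, hds, hcd⟩ := exists_fun_of_mem_tangentConeAt h
  refine mem_tangentConeAt_of_seq l (fun n => ε⁻¹ * c n) d hd hds ?_
  have := hcd.const_smul (ε⁻¹)
  rw [smul_smul, inv_mul_cancel₀ hε.ne', one_smul] at this
  simpa only [smul_smul] using this

/-- Viability condition on the boundary of the flow-set component `C₁` away from the jump set: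
for `x` in `R₁ = [0, θ₁+h₁] × [0, θ₂+h₂]` with `x₁ < θ₁+h₁`, the flow vector
`(k₁ - γ₁ x₁, -γ₂ x₂)` belongs to the tangent cone of `R₁` at `x`. -/
theorem viability_condition_C1
    (k₁ k₂ γ₁ γ₂ θ₁ θ₂ h₁ h₂ : ℝ)
    (hk₁ : 0 < k₁) (hk₂ : 0 < k₂) (hγ₁ : 0 < γ₁) (hγ₂ : 0 < γ₂)
    (hθ₁ : 0 < θ₁) (hθ₂ : 0 < θ₂) (hh₁ : 0 < h₁) (hh₂ : 0 < h₂)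
    (hθh₁ : 0 < θ₁ - h₁) (hθh₂ : 0 < θ₂ - h₂) :
    ∀ x : ℝ × ℝ, x ∈ Set.Icc (0 : ℝ) (θ₁ + h₁) ×ˢ Set.Icc (0 : ℝ) (θ₂ + h₂) →
      x.1 < θ₁ + h₁ →
      ((k₁ - γ₁ * x.1, -γ₂ * x.2) : ℝ × ℝ) ∈
        tangentConeAt ℝ (Set.Icc (0 : ℝ) (θ₁ + h₁) ×ˢ Set.Icc (0 : ℝ) (θ₂ + h₂)) x := by
  intro x hx hlt
  obtain ⟨⟨hx1l, hx1u⟩, hx2l, hx2u⟩ := hx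
  set v : ℝ × ℝ := (k₁ - γ₁ * x.1, -γ₂ * x.2) with hv
  -- choose small ε with x + ε • v in the rectangle
  obtain ⟨ε, hε, hε1, hε2, hε3⟩ : ∃ ε : ℝ, 0 < ε ∧ ε * γ₂ ≤ 1 ∧
      0 ≤ x.1 + ε * (k₁ - γ₁ * x.1) ∧ x.1 + ε * (k₁ - γ₁ * x.1) ≤ θ₁ + h₁ := by
    rcases le_or_gt (k₁ - γ₁ * x.1) 0 with hneg | hpos
    · -- v₁ ≤ 0; then x₁ ≥ k₁/γ₁ > 0
      have hx1pos : 0 < γ₁ * x.1 := lt_of_lt_of_le hk₁ (by linarith)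
      have hx1' : 0 < x.1 := by nlinarith
      refine ⟨min (γ₂⁻¹) (x.1 / (γ₁ * x.1 - k₁ + 1)), ?_, ?_, ?_, ?_⟩
      · exact lt_min (inv_pos.2 hγ₂) (div_pos hx1' (by linarith))
      · calc min (γ₂⁻¹) (x.1 / (γ₁ * x.1 - k₁ + 1)) * γ₂ ≤ γ₂⁻¹ * γ₂ := by
              gcongr; exact min_le_left _ _
          _ = 1 := inv_mul_cancel₀ hγ₂.ne'
      · have h1 : min (γ₂⁻¹) (x.1 / (γ₁ * x.1 - k₁ + 1)) ≤ x.1 / (γ₁ * x.1 - k₁ + 1) :=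
          min_le_right _ _
        have h2 : min (γ₂⁻¹) (x.1 / (γ₁ * x.1 - k₁ + 1)) * (γ₁ * x.1 - k₁) ≤
            x.1 / (γ₁ * x.1 - k₁ + 1) * (γ₁ * x.1 - k₁) := by
          apply mul_le_mul_of_nonneg_right h1 (by linarith)
        have h3 : x.1 / (γ₁ * x.1 - k₁ + 1) * (γ₁ * x.1 - k₁) ≤ x.1 := by
          rw [div_mul_eq_mul_div, div_le_iff₀ (by linarith)]
          nlinarith
        nlinarith
      · nlinarith [mul_nonneg (le_of_lt (lt_min (inv_pos.2 hγ₂)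
          (div_pos hx1' (show (0:ℝ) < γ₁ * x.1 - k₁ + 1 by linarith)))) (neg_nonneg.2 hneg)]
    · -- v₁ > 0; use strict upper bound
      refine ⟨min (γ₂⁻¹) ((θ₁ + h₁ - x.1) / (k₁ - γ₁ * x.1)), ?_, ?_, ?_, ?_⟩
      · exact lt_min (inv_pos.2 hγ₂) (div_pos (by linarith) hpos)
      · calc min (γ₂⁻¹) ((θ₁ + h₁ - x.1) / (k₁ - γ₁ * x.1)) * γ₂ ≤ γ₂⁻¹ * γ₂ := by
              gcongr; exact min_le_left _ _
          _ = 1 := inv_mul_cancel₀ hγ₂.ne'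
      · have hεp : 0 < min (γ₂⁻¹) ((θ₁ + h₁ - x.1) / (k₁ - γ₁ * x.1)) :=
          lt_min (inv_pos.2 hγ₂) (div_pos (by linarith) hpos)
        nlinarith [mul_pos hεp hpos]
      · have h1 : min (γ₂⁻¹) ((θ₁ + h₁ - x.1) / (k₁ - γ₁ * x.1)) * (k₁ - γ₁ * x.1) ≤
            (θ₁ + h₁ - x.1) / (k₁ - γ₁ * x.1) * (k₁ - γ₁ * x.1) := by
          apply mul_le_mul_of_nonneg_right (min_le_right _ _) hpos.le
        rw [div_mul_cancel₀ _ hpos.ne'] at h1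
        linarith
  apply tangent_smul_mem hε
  have hy : x + ε • v ∈ Set.Icc (0 : ℝ) (θ₁ + h₁) ×ˢ Set.Icc (0 : ℝ) (θ₂ + h₂) := by
    constructor
    · simp only [Prod.fst_add, Prod.smul_fst, hv, smul_eq_mul]
      exact ⟨hε2, hε3⟩
    · simp only [Prod.snd_add, Prod.smul_snd, hv, smul_eq_mul]
      constructor
      · have : x.2 + ε * (-γ₂ * x.2) = x.2 * (1 - ε * γ₂) := by ring
        rw [this]; exact mul_nonneg hx2l (by linarith)
      · nlinarith [mul_nonneg (mul_nonneg hε.le hγ₂.le) hx2l]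
  have hseg : openSegment ℝ x (x + ε • v) ⊆
      Set.Icc (0 : ℝ) (θ₁ + h₁) ×ˢ Set.Icc (0 : ℝ) (θ₂ + h₂) := by
    have hconv : Convex ℝ (Set.Icc (0 : ℝ) (θ₁ + h₁) ×ˢ Set.Icc (0 : ℝ) (θ₂ + h₂)) :=
      (convex_Icc _ _).prod (convex_Icc _ _)
    exact (openSegment_subset_segment ℝ _ _).trans
      (hconv.segment_subset ⟨⟨hx1l, hx1u⟩, hx2l, hx2u⟩ hy)
  have := mem_tangentConeAt_of_openSegment_subset hseg
  simpa using this
end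

section
/- Case 1 equilibrium (Proposition on equilibria, case 1): if θ₁ + h₁ < k₁/γ₁ and 0 < k₂/γ₂ < θ₂ + h₂, then the point z₁* = (k₁/γ₁, k₂/γ₂, 1, 0) belongs to the flow set C and satisfies F(z₁*) = 0, and it is the unique point z ∈ C with F(z) = 0. -/
/-- Case 1 equilibrium: if θ₁ + h₁ < k₁/γ₁ and 0 < k₂/γ₂ < θ₂ + h₂, then
z₁* = (k₁/γ₁, k₂/γ₂, 1, 0) is the unique zero of F in the flow set C. -/
theorem case1_equilibrium
    (k₁ k₂ γ₁ γ₂ θ₁ θ₂ h₁ h₂ : ℝ)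
    (hk₁ : 0 < k₁) (hk₂ : 0 < k₂) (hγ₁ : 0 < γ₁) (hγ₂ : 0 < γ₂)
    (hθ₁ : 0 < θ₁) (hθ₂ : 0 < θ₂) (hh₁ : 0 < h₁) (hh₂ : 0 < h₂)
    (hθh₁ : 0 < θ₁ - h₁) (hθh₂ : 0 < θ₂ - h₂)
    (η₁ η₂ : ℝ → ℝ → ℝ)
    (hη₁ : ∀ x q, η₁ x q = (2 * q - 1) * (-x + θ₁ + (1 - 2 * q) * h₁))
    (hη₂ : ∀ x q, η₂ x q = (2 * q - 1) * (-x + θ₂ + (1 - 2 * q) * h₂))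
    (C : Set (ℝ × ℝ × ℝ × ℝ))
    (hC : C = {z : ℝ × ℝ × ℝ × ℝ |
      0 ≤ z.1 ∧ 0 ≤ z.2.1 ∧ (z.2.2.1 = 0 ∨ z.2.2.1 = 1) ∧ (z.2.2.2 = 0 ∨ z.2.2.2 = 1) ∧
      η₁ z.1 z.2.2.1 ≤ 0 ∧ η₂ z.2.1 z.2.2.2 ≤ 0})
    (F : (ℝ × ℝ × ℝ × ℝ) → (ℝ × ℝ × ℝ × ℝ))
    (hF : ∀ z : ℝ × ℝ × ℝ × ℝ,
      F z = (k₁ * (1 - z.2.2.2) - γ₁ * z.1, k₂ * z.2.2.1 - γ₂ * z.2.1, 0, 0))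
    (hc1 : θ₁ + h₁ < k₁ / γ₁) (hc2 : 0 < k₂ / γ₂) (hc3 : k₂ / γ₂ < θ₂ + h₂) :
    ((k₁ / γ₁, k₂ / γ₂, 1, 0) : ℝ × ℝ × ℝ × ℝ) ∈ C ∧
    F (k₁ / γ₁, k₂ / γ₂, 1, 0) = 0 ∧
    ∀ z ∈ C, F z = 0 → z = ((k₁ / γ₁, k₂ / γ₂, 1, 0) : ℝ × ℝ × ℝ × ℝ) := by
  have hk1g : k₁ / γ₁ = k₁ / γ₁ := rfl
  refine ⟨?_, ?_, ?_⟩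
  · rw [hC]
    refine ⟨le_of_lt (div_pos hk₁ hγ₁), le_of_lt hc2, Or.inr rfl, Or.inl rfl, ?_, ?_⟩
    · rw [hη₁]; nlinarith
    · rw [hη₂]; nlinarith
  · rw [hF]
    have h1 : k₁ * (1 - (0:ℝ)) - γ₁ * (k₁ / γ₁) = 0 := by
      field_simp
      ring
    have h2 : k₂ * 1 - γ₂ * (k₂ / γ₂) = 0 := by
      field_simp
      ring
    simp only [h1, h2]
    rfl
  · rintro ⟨x₁, x₂, q₁, q₂⟩ hz hFz
    rw [hC] at hz
    obtain ⟨hx₁, hx₂, hq₁, hq₂, he₁, he₂⟩ := hz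
    rw [hF] at hFz
    simp only [Prod.mk.injEq, Prod.ext_iff, Prod.fst_zero, Prod.snd_zero] at hFz ⊢
    obtain ⟨hf1, hf2, -⟩ := hFz
    simp only at hf1 hf2 he₁ he₂ hq₁ hq₂ hx₁ hx₂
    rw [hη₁] at he₁
    rw [hη₂] at he₂
    rcases hq₂ with hq₂ | hq₂ <;> subst hq₂ <;> rcases hq₁ with hq₁ | hq₁ <;> subst hq₁ <;>
      [skip; skip; skip; skip]
    · -- q₂ = 0, q₁ = 0 : x₁ = k₁/γ₁, contradicts η₁
      exfalso
      have hx : x₁ = k₁ / γ₁ := by field_simp; linarith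
      rw [hx] at he₁; nlinarith
    · -- q₂ = 0, q₁ = 1 : the equilibrium
      have hx : x₁ = k₁ / γ₁ := by field_simp; linarith
      have hy : x₂ = k₂ / γ₂ := by field_simp; linarith
      exact ⟨hx, hy, rfl, rfl⟩
    · -- q₂ = 1, q₁ = 0 : x₁ = 0, x₂ = 0, contradicts η₂
      exfalso
      have hy : x₂ = 0 := by
        have : γ₂ * x₂ = 0 := by linarith
        exact (mul_eq_zero.mp this).resolve_left (ne_of_gt hγ₂)
      rw [hy] at he₂; nlinarith
    · -- q₂ = 1, q₁ = 1 : x₁ = 0, contradicts η₁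
      exfalso
      have hx : x₁ = 0 := by
        have : γ₁ * x₁ = 0 := by linarith
        exact (mul_eq_zero.mp this).resolve_left (ne_of_gt hγ₁)
      rw [hx] at he₁; nlinarith
end

section
/- Case 2 equilibrium (Proposition on equilibria, case 2): if 0 < k₁/γ₁ < θ₁ − h₁, then the point z₂* = (k₁/γ₁, 0, 0, 0) belongs to the flow set C and satisfies F(z₂*) = 0, and it is the unique point z ∈ C with F(z) = 0. -/
/-- Case 2 equilibrium: if 0 < k₁/γ₁ < θ₁ - h₁, then z₂* = (k₁/γ₁, 0, 0, 0)
is the unique zero of F in the flow set C. -/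
theorem case2_equilibrium
    (k₁ k₂ γ₁ γ₂ θ₁ θ₂ h₁ h₂ : ℝ)
    (hk₁ : 0 < k₁) (hk₂ : 0 < k₂) (hγ₁ : 0 < γ₁) (hγ₂ : 0 < γ₂)
    (hθ₁ : 0 < θ₁) (hθ₂ : 0 < θ₂) (hh₁ : 0 < h₁) (hh₂ : 0 < h₂)
    (hθh₁ : 0 < θ₁ - h₁) (hθh₂ : 0 < θ₂ - h₂)
    (η₁ η₂ : ℝ → ℝ → ℝ)
    (hη₁ : ∀ x q, η₁ x q = (2 * q - 1) * (-x + θ₁ + (1 - 2 * q) * h₁))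
    (hη₂ : ∀ x q, η₂ x q = (2 * q - 1) * (-x + θ₂ + (1 - 2 * q) * h₂))
    (C : Set (ℝ × ℝ × ℝ × ℝ))
    (hC : C = {z : ℝ × ℝ × ℝ × ℝ |
      0 ≤ z.1 ∧ 0 ≤ z.2.1 ∧ (z.2.2.1 = 0 ∨ z.2.2.1 = 1) ∧ (z.2.2.2 = 0 ∨ z.2.2.2 = 1) ∧
      η₁ z.1 z.2.2.1 ≤ 0 ∧ η₂ z.2.1 z.2.2.2 ≤ 0})
    (F : (ℝ × ℝ × ℝ × ℝ) → (ℝ × ℝ × ℝ × ℝ))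
    (hF : ∀ z : ℝ × ℝ × ℝ × ℝ,
      F z = (k₁ * (1 - z.2.2.2) - γ₁ * z.1, k₂ * z.2.2.1 - γ₂ * z.2.1, 0, 0))
    (hc1 : 0 < k₁ / γ₁) (hc2 : k₁ / γ₁ < θ₁ - h₁) :
    ((k₁ / γ₁, 0, 0, 0) : ℝ × ℝ × ℝ × ℝ) ∈ C ∧
    F (k₁ / γ₁, 0, 0, 0) = 0 ∧
    ∀ z ∈ C, F z = 0 → z = ((k₁ / γ₁, 0, 0, 0) : ℝ × ℝ × ℝ × ℝ) := by
  have hγ₁' : γ₁ ≠ 0 := ne_of_gt hγ₁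
  have hx : γ₁ * (k₁ / γ₁) = k₁ := by field_simp
  refine ⟨?_, ?_, ?_⟩
  · rw [hC]
    refine ⟨le_of_lt hc1, le_refl 0, Or.inl rfl, Or.inl rfl, ?_, ?_⟩
    · rw [hη₁]; nlinarith
    · rw [hη₂]; nlinarith
  · rw [hF]; simp only []
    refine Prod.ext ?_ (Prod.ext ?_ rfl)
    · simp [hx]
    · simp
  · rintro ⟨x₁, x₂, q₁, q₂⟩ hz hFz
    rw [hC] at hz
    obtain ⟨hx₁, hx₂, hq₁, hq₂, he₁, he₂⟩ := hz
    rw [hF] at hFz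
    have f1 : k₁ * (1 - q₂) - γ₁ * x₁ = 0 := by
      have := congrArg Prod.fst hFz; simpa using this
    have f2 : k₂ * q₁ - γ₂ * x₂ = 0 := by
      have := congrArg (fun p => p.2.1) hFz; simpa using this
    rw [hη₁] at he₁
    rw [hη₂] at he₂
    simp only at f1 f2 he₁ he₂ hx₁ hx₂
    rcases hq₂ with rfl | rfl
    · rcases hq₁ with rfl | rfl
      · have hx1 : x₁ = k₁ / γ₁ := by field_simp at f1 ⊢; linarith
        have hx2 : x₂ = 0 := by nlinarith
        simp [hx1, hx2]
      · exfalso; nlinarith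
    · rcases hq₁ with rfl | rfl
      · exfalso; nlinarith
      · exfalso; nlinarith
end

section
/- Case 3 equilibria (Proposition on equilibria, case 3): if θ₁ − h₁ < k₁/γ₁ < θ₁ + h₁ and 0 < k₂/γ₂ < θ₂ + h₂, then the set of points z ∈ C with F(z) = 0 is exactly {z₁*, z₂*}, where z₁* = (k₁/γ₁, k₂/γ₂, 1, 0) and z₂* = (k₁/γ₁, 0, 0, 0). -/
/-- Case 3 equilibria: if θ₁ - h₁ < k₁/γ₁ < θ₁ + h₁ and 0 < k₂/γ₂ < θ₂ + h₂, then
the zeros of F in the flow set C are exactly z₁* = (k₁/γ₁, k₂/γ₂, 1, 0) and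
z₂* = (k₁/γ₁, 0, 0, 0). -/
theorem case3_equilibria
    (k₁ k₂ γ₁ γ₂ θ₁ θ₂ h₁ h₂ : ℝ)
    (hk₁ : 0 < k₁) (hk₂ : 0 < k₂) (hγ₁ : 0 < γ₁) (hγ₂ : 0 < γ₂)
    (hθ₁ : 0 < θ₁) (hθ₂ : 0 < θ₂) (hh₁ : 0 < h₁) (hh₂ : 0 < h₂)
    (hθh₁ : 0 < θ₁ - h₁) (hθh₂ : 0 < θ₂ - h₂)
    (η₁ η₂ : ℝ → ℝ → ℝ)
    (hη₁ : ∀ x q, η₁ x q = (2 * q - 1) * (-x + θ₁ + (1 - 2 * q) * h₁))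
    (hη₂ : ∀ x q, η₂ x q = (2 * q - 1) * (-x + θ₂ + (1 - 2 * q) * h₂))
    (C : Set (ℝ × ℝ × ℝ × ℝ))
    (hC : C = {z : ℝ × ℝ × ℝ × ℝ |
      0 ≤ z.1 ∧ 0 ≤ z.2.1 ∧ (z.2.2.1 = 0 ∨ z.2.2.1 = 1) ∧ (z.2.2.2 = 0 ∨ z.2.2.2 = 1) ∧
      η₁ z.1 z.2.2.1 ≤ 0 ∧ η₂ z.2.1 z.2.2.2 ≤ 0})
    (F : (ℝ × ℝ × ℝ × ℝ) → (ℝ × ℝ × ℝ × ℝ))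
    (hF : ∀ z : ℝ × ℝ × ℝ × ℝ,
      F z = (k₁ * (1 - z.2.2.2) - γ₁ * z.1, k₂ * z.2.2.1 - γ₂ * z.2.1, 0, 0))
    (hc1 : θ₁ - h₁ < k₁ / γ₁) (hc2 : k₁ / γ₁ < θ₁ + h₁)
    (hc3 : 0 < k₂ / γ₂) (hc4 : k₂ / γ₂ < θ₂ + h₂) :
    {z ∈ C | F z = 0} =
      {((k₁ / γ₁, k₂ / γ₂, 1, 0) : ℝ × ℝ × ℝ × ℝ),
       ((k₁ / γ₁, 0, 0, 0) : ℝ × ℝ × ℝ × ℝ)} := by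
  have hγ₁' := hγ₁.ne'
  have hγ₂' := hγ₂.ne'
  ext ⟨x₁, x₂, q₁, q₂⟩
  simp only [hC, hF, hη₁, hη₂, Set.mem_setOf_eq, Set.mem_sep_iff, Set.mem_insert_iff,
    Set.mem_singleton_iff, Prod.mk.injEq, Prod.ext_iff, Prod.fst_zero, Prod.snd_zero]
  constructor
  · rintro ⟨⟨hx₁, hx₂, hq₁, hq₂, he₁, he₂⟩, hF1, hF2, -, -⟩
    rcases hq₂ with rfl | rfl
    · have hx1 : x₁ = k₁ / γ₁ := by field_simp; linarith
      rcases hq₁ with rfl | rfl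
      · right; have : x₂ = 0 := by nlinarith
        exact ⟨hx1, this, rfl, rfl⟩
      · left; have : x₂ = k₂ / γ₂ := by field_simp; linarith
        exact ⟨hx1, this, rfl, rfl⟩
    · exfalso
      have hx1 : x₁ = 0 := by nlinarith
      rcases hq₁ with rfl | rfl
      · simp at he₂; nlinarith
      · simp [hx1] at he₁; nlinarith
  · have h1 : 0 ≤ k₁ / γ₁ := le_of_lt (lt_trans hθh₁ hc1)
    rintro (⟨rfl, rfl, rfl, rfl⟩ | ⟨rfl, rfl, rfl, rfl⟩)
    · refine ⟨⟨h1, le_of_lt hc3, Or.inr rfl, Or.inl rfl, by nlinarith, by nlinarith⟩, ?_, ?_, trivial, trivial⟩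
      · field_simp; ring
      · field_simp; ring
    · refine ⟨⟨h1, le_refl 0, Or.inl rfl, Or.inl rfl, by nlinarith, by nlinarith⟩, ?_, ?_, trivial, trivial⟩
      · field_simp; ring
      · ring
end

section
/- Case 4 equilibrium (Proposition on equilibria, case 4): if θ₁ − h₁ < k₁/γ₁ < θ₁ + h₁ and θ₂ + h₂ < k₂/γ₂, then the point z₂* = (k₁/γ₁, 0, 0, 0) belongs to the flow set C and satisfies F(z₂*) = 0, and it is the unique point z ∈ C with F(z) = 0. -/
/-- Case 4 equilibrium: if θ₁ - h₁ < k₁/γ₁ < θ₁ + h₁ and θ₂ + h₂ < k₂/γ₂, then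
z₂* = (k₁/γ₁, 0, 0, 0) is the unique zero of F in the flow set C. -/
theorem case4_equilibrium
    (k₁ k₂ γ₁ γ₂ θ₁ θ₂ h₁ h₂ : ℝ)
    (hk₁ : 0 < k₁) (hk₂ : 0 < k₂) (hγ₁ : 0 < γ₁) (hγ₂ : 0 < γ₂)
    (hθ₁ : 0 < θ₁) (hθ₂ : 0 < θ₂) (hh₁ : 0 < h₁) (hh₂ : 0 < h₂)
    (hθh₁ : 0 < θ₁ - h₁) (hθh₂ : 0 < θ₂ - h₂)
    (η₁ η₂ : ℝ → ℝ → ℝ)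
    (hη₁ : ∀ x q, η₁ x q = (2 * q - 1) * (-x + θ₁ + (1 - 2 * q) * h₁))
    (hη₂ : ∀ x q, η₂ x q = (2 * q - 1) * (-x + θ₂ + (1 - 2 * q) * h₂))
    (C : Set (ℝ × ℝ × ℝ × ℝ))
    (hC : C = {z : ℝ × ℝ × ℝ × ℝ |
      0 ≤ z.1 ∧ 0 ≤ z.2.1 ∧ (z.2.2.1 = 0 ∨ z.2.2.1 = 1) ∧ (z.2.2.2 = 0 ∨ z.2.2.2 = 1) ∧
      η₁ z.1 z.2.2.1 ≤ 0 ∧ η₂ z.2.1 z.2.2.2 ≤ 0})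
    (F : (ℝ × ℝ × ℝ × ℝ) → (ℝ × ℝ × ℝ × ℝ))
    (hF : ∀ z : ℝ × ℝ × ℝ × ℝ,
      F z = (k₁ * (1 - z.2.2.2) - γ₁ * z.1, k₂ * z.2.2.1 - γ₂ * z.2.1, 0, 0))
    (hc1 : θ₁ - h₁ < k₁ / γ₁) (hc2 : k₁ / γ₁ < θ₁ + h₁) (hc3 : θ₂ + h₂ < k₂ / γ₂) :
    ((k₁ / γ₁, 0, 0, 0) : ℝ × ℝ × ℝ × ℝ) ∈ C ∧
    F (k₁ / γ₁, 0, 0, 0) = 0 ∧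
    ∀ z ∈ C, F z = 0 → z = ((k₁ / γ₁, 0, 0, 0) : ℝ × ℝ × ℝ × ℝ) := by
  have hγ₁' := hγ₁.ne'
  have hkγ : 0 ≤ k₁ / γ₁ := le_of_lt (div_pos hk₁ hγ₁)
  refine ⟨?_, ?_, ?_⟩
  · rw [hC]
    refine ⟨hkγ, le_refl 0, Or.inl rfl, Or.inl rfl, ?_, ?_⟩
    · rw [hη₁]; nlinarith
    · rw [hη₂]; nlinarith
  · rw [hF]
    have h0 : k₁ * (1 - (0:ℝ)) - γ₁ * (k₁ / γ₁) = 0 := by field_simp; ring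
    simp [h0]; field_simp; ring
  · rintro ⟨x₁, x₂, q₁, q₂⟩ hz hFz
    rw [hC] at hz
    obtain ⟨hx₁, hx₂, hq₁, hq₂, he₁, he₂⟩ := hz
    rw [hF] at hFz
    simp only [Prod.mk.injEq, Prod.ext_iff, Prod.fst_zero, Prod.snd_zero] at hFz ⊢
    obtain ⟨hf₁, hf₂, -⟩ := hFz
    rw [hη₁] at he₁; rw [hη₂] at he₂
    simp only at hf₁ hf₂ he₁ he₂ hx₁ hx₂
    have hk1 : k₁ = γ₁ * (k₁ / γ₁) := by field_simp
    rcases hq₂ with hq₂ | hq₂ <;> rcases hq₁ with hq₁ | hq₁ <;> subst hq₁ <;> subst hq₂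
    · have hx : x₁ = k₁ / γ₁ := by field_simp; linarith
      have hx2 : x₂ = 0 := by nlinarith
      exact ⟨hx, hx2, rfl, rfl⟩
    · exfalso
      have hx2 : x₂ = k₂ / γ₂ := by field_simp; linarith
      rw [hx2] at he₂
      nlinarith [div_pos hk₂ hγ₂]
    · exfalso
      have hx : x₁ = 0 := by nlinarith
      rw [hx] at he₁
      nlinarith
    · exfalso
      have hx : x₁ = 0 := by nlinarith
      rw [hx] at he₁
      nlinarith
end

section
/- Case 5 — no isolated equilibrium (Proposition on equilibria, case 5): if θ₁ + h₁ < k₁/γ₁ and θ₂ + h₂ < k₂/γ₂, then there is no point z ∈ C with F(z) = 0. -/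
/-- Case 5 — no isolated equilibrium: if θ₁ + h₁ < k₁/γ₁ and θ₂ + h₂ < k₂/γ₂, then
there is no point z ∈ C with F z = 0. -/
theorem case5_no_equilibrium
    (k₁ k₂ γ₁ γ₂ θ₁ θ₂ h₁ h₂ : ℝ)
    (hk₁ : 0 < k₁) (hk₂ : 0 < k₂) (hγ₁ : 0 < γ₁) (hγ₂ : 0 < γ₂)
    (hθ₁ : 0 < θ₁) (hθ₂ : 0 < θ₂) (hh₁ : 0 < h₁) (hh₂ : 0 < h₂)
    (hθh₁ : 0 < θ₁ - h₁) (hθh₂ : 0 < θ₂ - h₂)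
    (η₁ η₂ : ℝ → ℝ → ℝ)
    (hη₁ : ∀ x q, η₁ x q = (2 * q - 1) * (-x + θ₁ + (1 - 2 * q) * h₁))
    (hη₂ : ∀ x q, η₂ x q = (2 * q - 1) * (-x + θ₂ + (1 - 2 * q) * h₂))
    (C : Set (ℝ × ℝ × ℝ × ℝ))
    (hC : C = {z : ℝ × ℝ × ℝ × ℝ |
      0 ≤ z.1 ∧ 0 ≤ z.2.1 ∧ (z.2.2.1 = 0 ∨ z.2.2.1 = 1) ∧ (z.2.2.2 = 0 ∨ z.2.2.2 = 1) ∧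
      η₁ z.1 z.2.2.1 ≤ 0 ∧ η₂ z.2.1 z.2.2.2 ≤ 0})
    (F : (ℝ × ℝ × ℝ × ℝ) → (ℝ × ℝ × ℝ × ℝ))
    (hF : ∀ z : ℝ × ℝ × ℝ × ℝ,
      F z = (k₁ * (1 - z.2.2.2) - γ₁ * z.1, k₂ * z.2.2.1 - γ₂ * z.2.1, 0, 0))
    (hc1 : θ₁ + h₁ < k₁ / γ₁) (hc2 : θ₂ + h₂ < k₂ / γ₂) :
    ∀ z ∈ C, F z ≠ 0 := by
  intro z hz heq
  obtain ⟨x₁, x₂, q₁, q₂⟩ := z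
  rw [hC] at hz
  obtain ⟨hx₁, hx₂, hq₁, hq₂, he₁, he₂⟩ := hz
  rw [hF] at heq
  simp only [Prod.mk.injEq, Prod.ext_iff] at heq
  have hfx₁ : k₁ * (1 - q₂) - γ₁ * x₁ = 0 := heq.1
  have hfx₂ : k₂ * q₁ - γ₂ * x₂ = 0 := heq.2.1
  rw [hη₁] at he₁
  rw [hη₂] at he₂
  have hk₁' : θ₁ + h₁ < k₁ / γ₁ := hc1
  rcases hq₁ with rfl | rfl <;> rcases hq₂ with rfl | rfl <;>
    simp only [mul_zero, mul_one, sub_zero, zero_sub] at hfx₁ hfx₂ he₁ he₂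
  · -- q₁ = 0, q₂ = 0 : x₁ = k₁/γ₁ > θ₁+h₁ but η₁ forces x₁ ≤ θ₁+h₁
    have hx : x₁ = k₁ / γ₁ := by field_simp; linarith
    nlinarith
  · -- q₁ = 0, q₂ = 1 : x₂ = 0 but η₂ forces x₂ ≥ θ₂ - h₂ > 0
    have hx : x₂ = 0 := by nlinarith
    nlinarith
  · -- q₁ = 1, q₂ = 0 : x₂ = k₂/γ₂ but η₂ forces x₂ ≤ θ₂+h₂
    have hx : x₂ = k₂ / γ₂ := by field_simp; linarith
    nlinarith
  · -- q₁ = 1, q₂ = 1 : x₁ = 0 but η₁ forces x₁ ≥ θ₁ - h₁ > 0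
    have hx : x₁ = 0 := by nlinarith
    nlinarith
end

section
/- Forward invariance and convergence in the C₂ region (key step in the proof that z₁* is globally asymptotically stable, case 1): assume θ₁ + h₁ < k₁/γ₁ and 0 < k₂/γ₂ < θ₂ + h₂, and let K₂ = [θ₁−h₁, ∞) × [0, θ₂+h₂] ⊂ ℝ². For every x₀ ∈ K₂, the solution x(t) = (k₁/γ₁ + e^{−γ₁t}(x₀₁ − k₁/γ₁), k₂/γ₂ + e^{−γ₂t}(x₀₂ − k₂/γ₂)) of the flow with q = (1,0) satisfies x(t) ∈ K₂ for all t ≥ 0, and x(t) → (k₁/γ₁, k₂/γ₂) as t → ∞. -/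
lemma interp_bounds {a b lo hi : ℝ} (s : ℝ) (hs0 : 0 < s) (hs1 : s ≤ 1)
    (ha : lo ≤ a) (ha' : a ≤ hi) (hb : lo ≤ b) (hb' : b ≤ hi) :
    lo ≤ a + s * (b - a) ∧ a + s * (b - a) ≤ hi := by
  constructor <;> nlinarith

/-- Forward invariance of the `C₂` region `K₂ = [θ₁-h₁, ∞) × [0, θ₂+h₂]` and convergence
to the equilibrium `(k₁/γ₁, k₂/γ₂)` for the explicit solution of the flow with `q = (1,0)`,
under the case-1 parameter conditions. -/
theorem C2_region_invariant_and_convergent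
    (k₁ k₂ γ₁ γ₂ θ₁ θ₂ h₁ h₂ : ℝ)
    (hk₁ : 0 < k₁) (hk₂ : 0 < k₂) (hγ₁ : 0 < γ₁) (hγ₂ : 0 < γ₂)
    (hθ₁ : 0 < θ₁) (hθ₂ : 0 < θ₂) (hh₁ : 0 < h₁) (hh₂ : 0 < h₂)
    (hθh₁ : 0 < θ₁ - h₁) (hθh₂ : 0 < θ₂ - h₂)
    (hc1 : θ₁ + h₁ < k₁ / γ₁) (hc2 : 0 < k₂ / γ₂) (hc3 : k₂ / γ₂ < θ₂ + h₂)
    (x₀ : ℝ × ℝ) (hx₀ : x₀ ∈ Set.Ici (θ₁ - h₁) ×ˢ Set.Icc (0 : ℝ) (θ₂ + h₂))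
    (x : ℝ → ℝ × ℝ)
    (hx : ∀ t, x t = (k₁ / γ₁ + Real.exp (-γ₁ * t) * (x₀.1 - k₁ / γ₁),
                      k₂ / γ₂ + Real.exp (-γ₂ * t) * (x₀.2 - k₂ / γ₂))) :
    (∀ t, 0 ≤ t → x t ∈ Set.Ici (θ₁ - h₁) ×ˢ Set.Icc (0 : ℝ) (θ₂ + h₂)) ∧
    Filter.Tendsto x Filter.atTop (nhds ((k₁ / γ₁, k₂ / γ₂) : ℝ × ℝ)) := by
  obtain ⟨h1, h2, h3⟩ : (θ₁ - h₁ ≤ x₀.1) ∧ 0 ≤ x₀.2 ∧ x₀.2 ≤ θ₂ + h₂ := by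
    simpa [Set.mem_prod, Set.mem_Icc] using hx₀
  constructor
  · intro t ht
    rw [hx t]
    have e1 : 0 < Real.exp (-γ₁ * t) := Real.exp_pos _
    have e1' : Real.exp (-γ₁ * t) ≤ 1 := by
      apply Real.exp_le_one_iff.mpr; nlinarith
    have e2 : 0 < Real.exp (-γ₂ * t) := Real.exp_pos _
    have e2' : Real.exp (-γ₂ * t) ≤ 1 := by
      apply Real.exp_le_one_iff.mpr; nlinarith
    refine ⟨?_, ?_, ?_⟩
    · show θ₁ - h₁ ≤ _
      nlinarith
    · show (0:ℝ) ≤ _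
      exact (interp_bounds _ e2 e2' hc2.le hc3.le h2 h3).1
    · exact (interp_bounds _ e2 e2' hc2.le hc3.le h2 h3).2
  · have hT : ∀ (γ c : ℝ), 0 < γ →
        Filter.Tendsto (fun t => Real.exp (-γ * t) * c) Filter.atTop (nhds 0) := by
      intro γ c hγ
      have hlin : Filter.Tendsto (fun t : ℝ => -γ * t) Filter.atTop Filter.atBot :=
        Filter.Tendsto.const_mul_atTop_of_neg (by linarith) Filter.tendsto_id
      have h2 := (Real.tendsto_exp_atBot).comp hlin
      simpa [Function.comp] using h2.mul_const c
    have t1 := ((hT γ₁ (x₀.1 - k₁/γ₁) hγ₁).const_add (k₁/γ₁))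
    have t2 := ((hT γ₂ (x₀.2 - k₂/γ₂) hγ₂).const_add (k₂/γ₂))
    have := t1.prodMk_nhds t2
    simp only [add_zero] at this
    exact Filter.Tendsto.congr (fun t => (hx t).symm) this
end

section
/- Finite-time exit from the C₁ region under case 1 parameters: assume θ₁ + h₁ < k₁/γ₁, and let x₀ ∈ [0, θ₁+h₁] × [0, θ₂+h₂]. Consider the solution x(t) = (k₁/γ₁ + e^{−γ₁t}(x₀₁ − k₁/γ₁), x₀₂·e^{−γ₂t}) of the flow with q = (0,0). Then there exists t* ≥ 0 such that x₁(t*) = θ₁ + h₁, while for all t ∈ [0, t*] one has x(t) ∈ [0, θ₁+h₁] × [0, θ₂+h₂]; i.e., every trajectory starting in the C₁ region reaches the switching boundary x₁ = θ₁ + h₁ in finite time without leaving the region. -/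
/-- Finite-time exit from the `C₁` region under case-1 parameters: if `θ₁ + h₁ < k₁/γ₁`,
then the flow with `q = (0,0)` started in `[0, θ₁+h₁] × [0, θ₂+h₂]` reaches the switching
boundary `x₁ = θ₁ + h₁` in finite time without leaving the region. -/
theorem finite_time_exit_from_C1
    (k₁ k₂ γ₁ γ₂ θ₁ θ₂ h₁ h₂ : ℝ)
    (hk₁ : 0 < k₁) (hk₂ : 0 < k₂) (hγ₁ : 0 < γ₁) (hγ₂ : 0 < γ₂)
    (hθ₁ : 0 < θ₁) (hθ₂ : 0 < θ₂) (hh₁ : 0 < h₁) (hh₂ : 0 < h₂)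
    (hθh₁ : 0 < θ₁ - h₁) (hθh₂ : 0 < θ₂ - h₂)
    (hc1 : θ₁ + h₁ < k₁ / γ₁)
    (x₀ : ℝ × ℝ) (hx₀ : x₀ ∈ Set.Icc (0 : ℝ) (θ₁ + h₁) ×ˢ Set.Icc (0 : ℝ) (θ₂ + h₂))
    (x : ℝ → ℝ × ℝ)
    (hx : ∀ t, x t = (k₁ / γ₁ + Real.exp (-γ₁ * t) * (x₀.1 - k₁ / γ₁),
                      x₀.2 * Real.exp (-γ₂ * t))) :
    ∃ tstar, 0 ≤ tstar ∧ (x tstar).1 = θ₁ + h₁ ∧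
      ∀ t, 0 ≤ t → t ≤ tstar →
        x t ∈ Set.Icc (0 : ℝ) (θ₁ + h₁) ×ˢ Set.Icc (0 : ℝ) (θ₂ + h₂) := by
  obtain ⟨⟨h01, h11⟩, h02, h12⟩ := hx₀
  have hAx : x₀.1 < k₁ / γ₁ := lt_of_le_of_lt h11 hc1
  have hB : 0 < k₁ / γ₁ - (θ₁ + h₁) := by linarith
  have hA : 0 < k₁ / γ₁ - x₀.1 := by linarith
  set r := (k₁ / γ₁ - (θ₁ + h₁)) / (k₁ / γ₁ - x₀.1) with hrdef
  have hr0 : 0 < r := div_pos hB hA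
  have hr1 : r ≤ 1 := by rw [hrdef, div_le_one hA]; linarith
  refine ⟨-(Real.log r) / γ₁, ?_, ?_, ?_⟩
  · apply div_nonneg _ hγ₁.le
    have := Real.log_nonpos hr0.le hr1
    linarith
  · rw [hx]
    have he : Real.exp (-γ₁ * (-(Real.log r) / γ₁)) = r := by
      rw [show -γ₁ * (-(Real.log r) / γ₁) = Real.log r by field_simp,
        Real.exp_log hr0]
    have hrval : r * (k₁ / γ₁ - x₀.1) = k₁ / γ₁ - (θ₁ + h₁) := by
      rw [hrdef, div_mul_cancel₀ _ hA.ne']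
    simp only [he]
    nlinarith [hrval]
  · intro t ht hts
    have he1 : Real.exp (-γ₁ * t) ≤ 1 := by
      apply Real.exp_le_one_iff.mpr
      nlinarith
    have her : r ≤ Real.exp (-γ₁ * t) := by
      have : Real.exp (-γ₁ * (-(Real.log r) / γ₁)) ≤ Real.exp (-γ₁ * t) := by
        apply Real.exp_le_exp.mpr
        have : -γ₁ * (-(Real.log r) / γ₁) = Real.log r := by field_simp
        rw [this]
        nlinarith [Real.log_nonpos hr0.le hr1]
      rwa [show -γ₁ * (-(Real.log r) / γ₁) = Real.log r by field_simp,
        Real.exp_log hr0] at this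
    have hrval : r * (k₁ / γ₁ - x₀.1) = k₁ / γ₁ - (θ₁ + h₁) := by
      rw [hrdef, div_mul_cancel₀ _ hA.ne']
    rw [hx]
    refine ⟨⟨?_, ?_⟩, ?_, ?_⟩
    · simp only
      nlinarith [Real.exp_pos (-γ₁ * t)]
    · simp only
      nlinarith
    · simp only
      positivity
    · simp only
      nlinarith [Real.exp_pos (-γ₂ * t), Real.exp_le_one_iff.mpr (by nlinarith : -γ₂ * t ≤ 0)]
end
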